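/- arXiv:2604.03775 — 2 statements merged into one kernel-verified Lean document; each statement's English description precedes it below -/
import Mathlib

section
/- For every real a with |a| < 1, (1/2π) ∫_{−π}^{π} [2(cos ω − a)/(1 + a² − 2a cos ω)]² dω = 2/(1 − a²). -/
open Real

private lemma acos_le {a : ℝ} (ω : ℝ) : a * Real.cos ω ≤ |a| := by
  calc a * Real.cos ω ≤ |a * Real.cos ω| := le_abs_self _
    _ = |a| * |Real.cos ω| := abs_mul _ _
    _ ≤ |a| * 1 := by gcongr; exact Real.abs_cos_le_one ω
    _ = |a| := mul_one _

private lemma Ppos {a : ℝ} (ha1 : -1 < a) (ha2 : a < 1) (ω : ℝ) :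
    0 < 1 + a ^ 2 - 2 * a * Real.cos ω := by
  have h1 := acos_le (a := a) ω
  have h2 : |a| < 1 := abs_lt.mpr ⟨ha1, ha2⟩
  have h3 : 0 < (1 - |a|) * (1 - |a|) := mul_pos (by linarith) (by linarith)
  nlinarith [sq_abs a]

private lemma Qpos {a : ℝ} (ha1 : -1 < a) (ha2 : a < 1) (ω : ℝ) :
    0 < 1 - a * Real.cos ω := by
  have h1 := acos_le (a := a) ω
  have h2 : |a| < 1 := abs_lt.mpr ⟨ha1, ha2⟩
  linarith

set_option maxHeartbeats 2000000 in
private lemma hasDerivAtH {a : ℝ} (ha1 : -1 < a) (ha2 : a < 1) (ha0 : a ≠ 0) (ω : ℝ) :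
    HasDerivAt (fun x : ℝ =>
      2 * Real.sin x / (a * (1 + a ^ 2 - 2 * a * Real.cos x)) + 2 * x / (1 - a ^ 2)
        + (2 * (3 * a ^ 2 - 1) / (a ^ 2 * (1 - a ^ 2)))
            * Real.arctan (a * Real.sin x / (1 - a * Real.cos x)))
      ((2 * (Real.cos ω - a) / (1 + a ^ 2 - 2 * a * Real.cos ω)) ^ 2) ω := by
  have hP := Ppos ha1 ha2 ω
  have hQ := Qpos ha1 ha2 ω
  have ha2' : (1 : ℝ) - a ^ 2 ≠ 0 := by nlinarith
  have hsin := Real.hasDerivAt_sin ω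
  have hcos := Real.hasDerivAt_cos ω
  have t1num : HasDerivAt (fun x => 2 * Real.sin x) (2 * Real.cos ω) ω := hsin.const_mul 2
  have t1den : HasDerivAt (fun x => a * (1 + a ^ 2 - 2 * a * Real.cos x))
      (a * (-(2 * a * (-Real.sin ω)))) ω :=
    (((hcos.const_mul (2 * a)).const_sub (1 + a ^ 2))).const_mul a
  have hden_ne : a * (1 + a ^ 2 - 2 * a * Real.cos ω) ≠ 0 := mul_ne_zero ha0 hP.ne'
  have t1 := t1num.div t1den hden_ne
  have t2 : HasDerivAt (fun x : ℝ => 2 * x / (1 - a ^ 2)) (2 * 1 / (1 - a ^ 2)) ω :=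
    ((hasDerivAt_id ω).const_mul 2).div_const (1 - a ^ 2)
  have unum : HasDerivAt (fun x => a * Real.sin x) (a * Real.cos ω) ω := hsin.const_mul a
  have uden : HasDerivAt (fun x => 1 - a * Real.cos x) (-(a * (-Real.sin ω))) ω :=
    (hcos.const_mul a).const_sub 1
  have hu := unum.div uden hQ.ne'
  have t3 := (hu.arctan).const_mul (2 * (3 * a ^ 2 - 1) / (a ^ 2 * (1 - a ^ 2)))
  have := (t1.add t2).add t3
  refine this.congr_deriv (Eq.symm ?_)
  have hs : Real.sin ω ^ 2 = 1 - Real.cos ω ^ 2 := Real.sin_sq ω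
  have h1u : 1 + (a * Real.sin ω / (1 - a * Real.cos ω)) ^ 2 ≠ 0 := by positivity
  simp only [Pi.div_apply]
  have hPne : 1 + a ^ 2 - 2 * Real.cos ω * a ≠ 0 := by rw [mul_right_comm]; exact hP.ne'
  have hQne : 1 - Real.cos ω * a ≠ 0 := by rw [mul_comm]; exact hQ.ne'
  have hE : 1 + (a * Real.sin ω / (1 - a * Real.cos ω)) ^ 2
      = (1 + a ^ 2 - 2 * a * Real.cos ω) / (1 - a * Real.cos ω) ^ 2 := by
    rw [div_pow, one_add_div (pow_ne_zero 2 hQ.ne')]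
    congr 1
    linear_combination a ^ 2 * hs
  rw [hE]
  field_simp
  rw [hs]
  ring

theorem tangent_norm_sq (a : ℝ) (ha : |a| < 1) :
    (1 / (2 * π)) *
      ∫ ω in (-π)..π, (2 * (Real.cos ω - a) / (1 + a ^ 2 - 2 * a * Real.cos ω)) ^ 2
      = 2 / (1 - a ^ 2) := by
  obtain ⟨ha1, ha2⟩ := abs_lt.mp ha
  have ha2' : (1 : ℝ) - a ^ 2 ≠ 0 := by nlinarith
  rcases eq_or_ne a 0 with rfl | ha0
  · have hcong : ∀ ω ∈ Set.uIcc (-π) π,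
        (2 * (Real.cos ω - 0) / (1 + (0:ℝ) ^ 2 - 2 * 0 * Real.cos ω)) ^ 2
          = 4 * Real.cos ω ^ 2 := by
      intro ω _; norm_num; ring
    rw [intervalIntegral.integral_congr hcong, intervalIntegral.integral_const_mul,
      integral_cos_sq]
    simp [Real.sin_pi, Real.cos_pi]
    field_simp
    ring
  · have key : (∫ ω in (-π)..π, (2 * (Real.cos ω - a) / (1 + a ^ 2 - 2 * a * Real.cos ω)) ^ 2)
        = 4 * π / (1 - a ^ 2) := by
      have hint : IntervalIntegrable
          (fun ω => (2 * (Real.cos ω - a) / (1 + a ^ 2 - 2 * a * Real.cos ω)) ^ 2)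
          MeasureTheory.volume (-π) π := by
        apply Continuous.intervalIntegrable
        exact ((continuous_const.mul (Real.continuous_cos.sub continuous_const)).div
          (continuous_const.sub (continuous_const.mul Real.continuous_cos))
          (fun x => (Ppos ha1 ha2 x).ne')).pow 2
      rw [intervalIntegral.integral_eq_sub_of_hasDerivAt
        (fun ω _ => hasDerivAtH ha1 ha2 ha0 ω) hint]
      simp [Real.sin_pi, Real.cos_pi]
      field_simp
      ring
    rw [key]
    field_simp
    ring
end

section
/- Let |a| < 1, |b| < 1 be real. Define h(ω) = 1/P_b(ω), ẽ₁ = 1, ẽ₂(ω) = 2(cos ω − a)/P_a(ω), with the normalized inner product ⟨f,g⟩ = (1/2π)∫_{−π}^{π} f g dω. Then the squared norm of the orthogonal residual R = h − ⟨h,ẽ₁⟩ẽ₁/‖ẽ₁‖² − ⟨h,ẽ₂⟩ẽ₂/‖ẽ₂‖² equals 2b²(a − b)² / [(1 − b²)³ (1 − ab)²]. -/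
open Real

/-- Normalized inner product on `[-π, π]`. -/
noncomputable def nip (f g : ℝ → ℝ) : ℝ :=
  (1 / (2 * π)) * ∫ ω in (-π)..π, f ω * g ω

/-- AR(1) spectral factor. -/
noncomputable def Pker (c ω : ℝ) : ℝ := 1 + c ^ 2 - 2 * c * Real.cos ω

lemma pker_pos {c : ℝ} (hc : |c| < 1) (ω : ℝ) : 0 < Pker c ω := by
  obtain ⟨h3, h4⟩ := abs_lt.1 hc
  have h1 := Real.neg_one_le_cos ω
  have h2 := Real.cos_le_one ω
  unfold Pker
  rcases le_or_gt 0 c with hc0 | hc0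
  · nlinarith [mul_nonneg hc0 (by linarith : (0:ℝ) ≤ 1 - Real.cos ω)]
  · nlinarith [mul_nonneg (by linarith : (0:ℝ) ≤ -c) (by linarith : (0:ℝ) ≤ 1 + Real.cos ω)]

lemma denom_pos {c : ℝ} (hc : |c| < 1) (ω : ℝ) : 0 < 1 - c * Real.cos ω := by
  obtain ⟨h3, h4⟩ := abs_lt.1 hc
  have h1 := Real.neg_one_le_cos ω
  have h2 := Real.cos_le_one ω
  rcases le_or_gt 0 c with hc0 | hc0
  · nlinarith [mul_le_mul_of_nonneg_left h2 hc0]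
  · nlinarith [mul_le_mul_of_nonneg_left (by linarith : -Real.cos ω ≤ 1) (by linarith : (0:ℝ) ≤ -c)]

lemma hasDerivAt_atan {c : ℝ} (hc : |c| < 1) (ω : ℝ) :
    HasDerivAt (fun ω => Real.arctan (c * Real.sin ω / (1 - c * Real.cos ω)))
      ((c * Real.cos ω - c ^ 2) / Pker c ω) ω := by
  have hd := denom_pos hc ω
  have hP := pker_pos hc ω
  have hpy : Real.sin ω ^ 2 = 1 - Real.cos ω ^ 2 := by
    have := Real.sin_sq_add_cos_sq ω; linarith
  have h1 : HasDerivAt (fun ω => c * Real.sin ω / (1 - c * Real.cos ω))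
      ((c * Real.cos ω * (1 - c * Real.cos ω) - c * Real.sin ω * (c * Real.sin ω)) /
        (1 - c * Real.cos ω) ^ 2) ω := by
    have := ((Real.hasDerivAt_sin ω).const_mul c).div
      (((Real.hasDerivAt_cos ω).const_mul c).const_sub 1) hd.ne'
    refine this.congr_deriv (Eq.symm ?_)
    ring
  have h2 := (Real.hasDerivAt_arctan (c * Real.sin ω / (1 - c * Real.cos ω))).comp ω h1
  have hnum : c * Real.cos ω * (1 - c * Real.cos ω) - c * Real.sin ω * (c * Real.sin ω)
      = c * Real.cos ω - c ^ 2 := by linear_combination (-(c^2)) * hpy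
  have key : 1 + (c * Real.sin ω / (1 - c * Real.cos ω)) ^ 2
      = Pker c ω / (1 - c * Real.cos ω) ^ 2 := by
    unfold Pker
    field_simp
    linear_combination (c^2) * hpy
  refine h2.congr_deriv (Eq.symm ?_)
  rw [hnum, key]
  field_simp

lemma pker_cont (c : ℝ) : Continuous (fun ω => Pker c ω) := by
  unfold Pker; fun_prop

lemma inv_pker_cont {c : ℝ} (hc : |c| < 1) : Continuous (fun ω => 1 / Pker c ω) :=
  continuous_const.div (pker_cont c) (fun ω => (pker_pos hc ω).ne')

lemma hasDerivAt_pker (c ω : ℝ) : HasDerivAt (fun ω => Pker c ω) (2 * c * Real.sin ω) ω := by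
  have h : HasDerivAt (fun ω => 1 + c ^ 2 - 2 * c * Real.cos ω)
      (-(2 * c * -Real.sin ω)) ω := ((Real.hasDerivAt_cos ω).const_mul (2*c)).const_sub _
  refine h.congr_deriv (Eq.symm ?_)
  ring

lemma one_ne_csq {c : ℝ} (hc : |c| < 1) : 1 - c ^ 2 ≠ 0 := by
  have := abs_lt.1 hc; nlinarith

/-- Antiderivative of `1/Pker c`. -/
lemma hasDerivAt_F {c : ℝ} (hc : |c| < 1) (ω : ℝ) :
    HasDerivAt (fun ω => (ω + 2 * Real.arctan (c * Real.sin ω / (1 - c * Real.cos ω))) / (1 - c ^ 2))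
      (1 / Pker c ω) ω := by
  have h := ((hasDerivAt_id ω).add ((hasDerivAt_atan hc ω).const_mul 2)).div_const (1 - c ^ 2)
  refine h.congr_deriv (Eq.symm ?_)
  have hP := (pker_pos hc ω).ne'
  have h1 := one_ne_csq hc
  field_simp
  unfold Pker
  ring

lemma integral_inv_pker {c : ℝ} (hc : |c| < 1) :
    ∫ ω in (-π)..π, 1 / Pker c ω = 2 * π / (1 - c ^ 2) := by
  rw [intervalIntegral.integral_eq_sub_of_hasDerivAt
      (fun ω _ => hasDerivAt_F hc ω) ((inv_pker_cont hc).intervalIntegrable _ _)]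
  simp [Real.sin_pi, Real.arctan_zero]
  ring

/-- `∫ (c cos ω - c²)/P = 0`. -/
lemma integral_atan_zero {c : ℝ} (hc : |c| < 1) :
    ∫ ω in (-π)..π, (c * Real.cos ω - c ^ 2) / Pker c ω = 0 := by
  rw [intervalIntegral.integral_eq_sub_of_hasDerivAt (fun ω _ => hasDerivAt_atan hc ω)
      (((by fun_prop : Continuous fun ω => c * Real.cos ω - c ^ 2).div (pker_cont c)
        (fun ω => (pker_pos hc ω).ne')).intervalIntegrable _ _)]
  simp [Real.sin_pi]

lemma hasDerivAt_sin_div {c : ℝ} (hc : |c| < 1) (ω : ℝ) :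
    HasDerivAt (fun ω => Real.sin ω / Pker c ω)
      (((1 + c ^ 2) * Real.cos ω - 2 * c) / (Pker c ω) ^ 2) ω := by
  have hpy : Real.sin ω ^ 2 = 1 - Real.cos ω ^ 2 := by
    have := Real.sin_sq_add_cos_sq ω; linarith
  have h := (Real.hasDerivAt_sin ω).div (hasDerivAt_pker c ω) (pker_pos hc ω).ne'
  refine h.congr_deriv (Eq.symm ?_)
  have hP := (pker_pos hc ω).ne'
  field_simp
  unfold Pker
  linear_combination (2*c) * hpy

/-- Antiderivative of `1/P²`. -/
lemma hasDerivAt_F2 {c : ℝ} (hc : |c| < 1) (ω : ℝ) :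
    HasDerivAt (fun ω => (2 * c / (1 - c ^ 2) ^ 2) * (Real.sin ω / Pker c ω)
        + ((1 + c ^ 2) / (1 - c ^ 2) ^ 3) * (ω + 2 * Real.arctan (c * Real.sin ω / (1 - c * Real.cos ω))))
      (1 / (Pker c ω) ^ 2) ω := by
  have h := (((hasDerivAt_sin_div hc ω).const_mul (2 * c / (1 - c ^ 2) ^ 2)).add
    (((hasDerivAt_id ω).add ((hasDerivAt_atan hc ω).const_mul 2)).const_mul
      ((1 + c ^ 2) / (1 - c ^ 2) ^ 3)))
  refine h.congr_deriv (Eq.symm ?_)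
  have hP := (pker_pos hc ω).ne'
  have h1 := one_ne_csq hc
  field_simp
  unfold Pker
  ring

lemma integral_inv_pker_sq {c : ℝ} (hc : |c| < 1) :
    ∫ ω in (-π)..π, 1 / (Pker c ω) ^ 2 = 2 * π * (1 + c ^ 2) / (1 - c ^ 2) ^ 3 := by
  rw [intervalIntegral.integral_eq_sub_of_hasDerivAt (fun ω _ => hasDerivAt_F2 hc ω)
      ((continuous_const.div ((pker_cont c).pow 2)
        (fun ω => pow_ne_zero 2 (pker_pos hc ω).ne')).intervalIntegrable _ _)]
  simp [Real.sin_pi]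
  ring

lemma integral_cos_div_pker {c : ℝ} (hc : |c| < 1) :
    ∫ ω in (-π)..π, Real.cos ω / Pker c ω = 2 * π * c / (1 - c ^ 2) := by
  rcases eq_or_ne c 0 with rfl | hc0
  · simp [Pker]
  · have key : ∀ ω, Real.cos ω / Pker c ω
        = (1/c) * ((c * Real.cos ω - c ^ 2) / Pker c ω) + c * (1 / Pker c ω) := by
      intro ω
      have hP := (pker_pos hc ω).ne'
      field_simp
      ring
    simp only [key]
    have hi1 : IntervalIntegrable (fun ω => (1/c) * ((c * Real.cos ω - c ^ 2) / Pker c ω))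
        MeasureTheory.volume (-π) π :=
      (continuous_const.mul ((by fun_prop : Continuous fun ω => c * Real.cos ω - c ^ 2).div
        (pker_cont c) (fun ω => (pker_pos hc ω).ne'))).intervalIntegrable _ _
    have hi2 : IntervalIntegrable (fun ω => c * (1 / Pker c ω))
        MeasureTheory.volume (-π) π :=
      (continuous_const.mul (inv_pker_cont hc)).intervalIntegrable _ _
    rw [intervalIntegral.integral_add hi1 hi2, intervalIntegral.integral_const_mul,
      intervalIntegral.integral_const_mul, integral_atan_zero hc, integral_inv_pker hc]
    field_simp
    ring

lemma ab_lt_one {a b : ℝ} (ha : |a| < 1) (hb : |b| < 1) : a * b < 1 := by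
  have := abs_nonneg a
  have := abs_nonneg b
  calc a * b ≤ |a * b| := le_abs_self _
    _ = |a| * |b| := abs_mul a b
    _ < 1 := by nlinarith

lemma integral_inv_pker_mul {a b : ℝ} (ha : |a| < 1) (hb : |b| < 1) :
    ∫ ω in (-π)..π, 1 / (Pker a ω * Pker b ω)
      = 2 * π * (1 + a * b) / ((1 - a * b) * (1 - a ^ 2) * (1 - b ^ 2)) := by
  have hab : 1 - a * b ≠ 0 := by have := ab_lt_one ha hb; linarith
  have h1a := one_ne_csq ha
  have h1b := one_ne_csq hb
  rcases eq_or_ne a b with rfl | hne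
  · have key : ∀ ω, 1 / (Pker a ω * Pker a ω) = 1 / (Pker a ω) ^ 2 := by
      intro ω; rw [sq]
    simp only [key]
    rw [integral_inv_pker_sq ha]
    field_simp
  · have hanb : a - b ≠ 0 := sub_ne_zero.2 hne
    have key : ∀ ω, 1 / (Pker a ω * Pker b ω)
        = (1 / ((a - b) * (1 - a * b))) * (a * (1 / Pker a ω) - b * (1 / Pker b ω)) := by
      intro ω
      have hPa := (pker_pos ha ω).ne'
      have hPb := (pker_pos hb ω).ne'
      rw [mul_one_div, mul_one_div, div_sub_div _ _ hPa hPb,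
        show a * Pker b ω - Pker a ω * b = (a - b) * (1 - a * b) from by unfold Pker; ring]
      field_simp
    simp only [key]
    rw [intervalIntegral.integral_const_mul]
    have hi1 : IntervalIntegrable (fun ω => a * (1 / Pker a ω)) MeasureTheory.volume (-π) π :=
      (continuous_const.mul (inv_pker_cont ha)).intervalIntegrable _ _
    have hi2 : IntervalIntegrable (fun ω => b * (1 / Pker b ω)) MeasureTheory.volume (-π) π :=
      (continuous_const.mul (inv_pker_cont hb)).intervalIntegrable _ _
    rw [intervalIntegral.integral_sub hi1 hi2, intervalIntegral.integral_const_mul,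
      intervalIntegral.integral_const_mul, integral_inv_pker ha, integral_inv_pker hb]
    field_simp
    ring

lemma e_cont {a : ℝ} (ha : |a| < 1) : Continuous (fun ω => 2 * (Real.cos ω - a) / Pker a ω) :=
  (by fun_prop : Continuous fun ω => 2 * (Real.cos ω - a)).div (pker_cont a)
    (fun ω => (pker_pos ha ω).ne')

lemma J_e {a : ℝ} (ha : |a| < 1) : ∫ ω in (-π)..π, 2 * (Real.cos ω - a) / Pker a ω = 0 := by
  rcases eq_or_ne a 0 with rfl | ha0
  · have key : ∀ ω, 2 * (Real.cos ω - 0) / Pker 0 ω = 2 * Real.cos ω := by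
      intro ω; unfold Pker; norm_num
    simp only [key]
    rw [intervalIntegral.integral_const_mul, integral_cos]
    simp
  · have key : ∀ ω, 2 * (Real.cos ω - a) / Pker a ω
        = (2/a) * ((a * Real.cos ω - a ^ 2) / Pker a ω) := by
      intro ω
      have hP := (pker_pos ha ω).ne'
      field_simp
    simp only [key]
    rw [intervalIntegral.integral_const_mul, integral_atan_zero ha]
    ring

lemma J_hh {b : ℝ} (hb : |b| < 1) : ∫ ω in (-π)..π, (1 / Pker b ω) * (1 / Pker b ω)
    = 2 * π * (1 + b ^ 2) / (1 - b ^ 2) ^ 3 := by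
  have key : ∀ ω, (1 / Pker b ω) * (1 / Pker b ω) = 1 / (Pker b ω) ^ 2 := by
    intro ω; rw [sq, div_mul_div_comm, one_mul]
  simp only [key]
  exact integral_inv_pker_sq hb

lemma J_he {a b : ℝ} (ha : |a| < 1) (hb : |b| < 1) :
    ∫ ω in (-π)..π, (1 / Pker b ω) * (2 * (Real.cos ω - a) / Pker a ω)
    = 4 * π * b / ((1 - b ^ 2) * (1 - a * b)) := by
  have h1b := one_ne_csq hb
  rcases eq_or_ne a 0 with rfl | ha0
  · have key : ∀ ω, (1 / Pker b ω) * (2 * (Real.cos ω - 0) / Pker 0 ω)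
        = 2 * (Real.cos ω / Pker b ω) := by
      intro ω; unfold Pker; norm_num; ring
    simp only [key]
    rw [intervalIntegral.integral_const_mul, integral_cos_div_pker hb]
    field_simp
    ring
  · have h1a := one_ne_csq ha
    have hab : 1 - a * b ≠ 0 := by have := ab_lt_one ha hb; linarith
    have key : ∀ ω, (1 / Pker b ω) * (2 * (Real.cos ω - a) / Pker a ω)
        = (-(1/a)) * (1 / Pker b ω) + ((1 - a ^ 2)/a) * (1 / (Pker a ω * Pker b ω)) := by
      intro ω
      have hPa := (pker_pos ha ω).ne'
      have hPb := (pker_pos hb ω).ne'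
      field_simp
      unfold Pker
      ring
    simp only [key]
    have hi1 : IntervalIntegrable (fun ω => (-(1/a)) * (1 / Pker b ω))
        MeasureTheory.volume (-π) π := (continuous_const.mul (inv_pker_cont hb)).intervalIntegrable _ _
    have hi2 : IntervalIntegrable (fun ω => ((1 - a ^ 2)/a) * (1 / (Pker a ω * Pker b ω)))
        MeasureTheory.volume (-π) π :=
      (continuous_const.mul (continuous_const.div ((pker_cont a).mul (pker_cont b))
        (fun ω => mul_ne_zero (pker_pos ha ω).ne' (pker_pos hb ω).ne'))).intervalIntegrable _ _
    rw [intervalIntegral.integral_add hi1 hi2, intervalIntegral.integral_const_mul,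
      intervalIntegral.integral_const_mul, integral_inv_pker hb, integral_inv_pker_mul ha hb]
    field_simp
    ring

lemma J_ee {a : ℝ} (ha : |a| < 1) :
    ∫ ω in (-π)..π, (2 * (Real.cos ω - a) / Pker a ω) * (2 * (Real.cos ω - a) / Pker a ω)
    = 4 * π / (1 - a ^ 2) := by
  rcases eq_or_ne a 0 with rfl | ha0
  · have key : ∀ ω, (2 * (Real.cos ω - 0) / Pker 0 ω) * (2 * (Real.cos ω - 0) / Pker 0 ω)
        = 4 * Real.cos ω ^ 2 := by
      intro ω; unfold Pker; norm_num; ring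
    simp only [key]
    rw [intervalIntegral.integral_const_mul, integral_cos_sq]
    norm_num
  · have h1a := one_ne_csq ha
    have key : ∀ ω, (2 * (Real.cos ω - a) / Pker a ω) * (2 * (Real.cos ω - a) / Pker a ω)
        = 1/a^2 + ((-(2 * (1 - a ^ 2)/a^2)) * (1 / Pker a ω)
          + ((1 - a ^ 2)^2/a^2) * (1 / (Pker a ω)^2)) := by
      intro ω
      have hP := (pker_pos ha ω).ne'
      field_simp
      unfold Pker
      ring
    simp only [key]
    have hi1 : IntervalIntegrable (fun _ : ℝ => 1/a^2) MeasureTheory.volume (-π) π :=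
      intervalIntegrable_const
    have hi2 : IntervalIntegrable (fun ω => (-(2 * (1 - a ^ 2)/a^2)) * (1 / Pker a ω))
        MeasureTheory.volume (-π) π := (continuous_const.mul (inv_pker_cont ha)).intervalIntegrable _ _
    have hi3 : IntervalIntegrable (fun ω => ((1 - a ^ 2)^2/a^2) * (1 / (Pker a ω)^2))
        MeasureTheory.volume (-π) π :=
      (continuous_const.mul (continuous_const.div ((pker_cont a).pow 2)
        (fun ω => pow_ne_zero 2 (pker_pos ha ω).ne'))).intervalIntegrable _ _
    rw [intervalIntegral.integral_add hi1 (hi2.add hi3),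
      intervalIntegral.integral_add hi2 hi3, intervalIntegral.integral_const_mul,
      intervalIntegral.integral_const_mul, integral_inv_pker ha, integral_inv_pker_sq ha,
      intervalIntegral.integral_const]
    rw [smul_eq_mul]
    field_simp
    ring

lemma nip_h1 {b : ℝ} (hb : |b| < 1) :
    nip (fun ω => 1 / Pker b ω) (fun _ => 1) = 1 / (1 - b ^ 2) := by
  unfold nip
  simp only [mul_one]
  rw [integral_inv_pker hb]
  have hπ := Real.pi_ne_zero
  field_simp

lemma nip_11 : nip (fun _ : ℝ => (1:ℝ)) (fun _ => 1) = 1 := by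
  unfold nip
  simp only [mul_one]
  rw [intervalIntegral.integral_const]
  have hπ := Real.pi_ne_zero
  simp only [smul_eq_mul, mul_one, sub_neg_eq_add]
  field_simp
  ring

lemma nip_he {a b : ℝ} (ha : |a| < 1) (hb : |b| < 1) :
    nip (fun ω => 1 / Pker b ω) (fun ω => 2 * (Real.cos ω - a) / Pker a ω)
      = 2 * b / ((1 - b ^ 2) * (1 - a * b)) := by
  unfold nip
  rw [J_he ha hb]
  have hπ := Real.pi_ne_zero
  have h1b := one_ne_csq hb
  have hab : 1 - a * b ≠ 0 := by have := ab_lt_one ha hb; linarith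
  field_simp
  ring

lemma nip_ee {a : ℝ} (ha : |a| < 1) :
    nip (fun ω => 2 * (Real.cos ω - a) / Pker a ω) (fun ω => 2 * (Real.cos ω - a) / Pker a ω)
      = 2 / (1 - a ^ 2) := by
  unfold nip
  rw [J_ee ha]
  have hπ := Real.pi_ne_zero
  have h1a := one_ne_csq ha
  field_simp
  ring

theorem residual_norm_sq (a b : ℝ) (ha : |a| < 1) (hb : |b| < 1) :
    nip
      (fun ω =>
        (1 / Pker b ω)
          - (nip (fun ω => 1 / Pker b ω) (fun _ => 1) / nip (fun _ => 1) (fun _ => 1)) * 1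
          - (nip (fun ω => 1 / Pker b ω) (fun ω => 2 * (Real.cos ω - a) / Pker a ω) /
              nip (fun ω => 2 * (Real.cos ω - a) / Pker a ω)
                  (fun ω => 2 * (Real.cos ω - a) / Pker a ω))
            * (2 * (Real.cos ω - a) / Pker a ω))
      (fun ω =>
        (1 / Pker b ω)
          - (nip (fun ω => 1 / Pker b ω) (fun _ => 1) / nip (fun _ => 1) (fun _ => 1)) * 1
          - (nip (fun ω => 1 / Pker b ω) (fun ω => 2 * (Real.cos ω - a) / Pker a ω) /
              nip (fun ω => 2 * (Real.cos ω - a) / Pker a ω)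
                  (fun ω => 2 * (Real.cos ω - a) / Pker a ω))
            * (2 * (Real.cos ω - a) / Pker a ω))
      = 2 * b ^ 2 * (a - b) ^ 2 / ((1 - b ^ 2) ^ 3 * (1 - a * b) ^ 2) := by
  rw [nip_h1 hb, nip_11, nip_he ha hb, nip_ee ha]
  set c1 : ℝ := 1 / (1 - b ^ 2) / 1 with hc1
  set c2 : ℝ := 2 * b / ((1 - b ^ 2) * (1 - a * b)) / (2 / (1 - a ^ 2)) with hc2
  unfold nip
  rw [intervalIntegral.integral_congr
    (g := fun ω => (1 / Pker b ω) * (1 / Pker b ω)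
      + ((-(2 * c1)) * (1 / Pker b ω)
      + ((-(2 * c2)) * ((1 / Pker b ω) * (2 * (Real.cos ω - a) / Pker a ω))
      + (c1 * c1
      + ((2 * c1 * c2) * (2 * (Real.cos ω - a) / Pker a ω)
      + (c2 * c2) * ((2 * (Real.cos ω - a) / Pker a ω) * (2 * (Real.cos ω - a) / Pker a ω)))))))
    (fun ω _ => by ring)]
  have ch := inv_pker_cont hb
  have ce := e_cont ha
  have hi1 : IntervalIntegrable (fun ω => (1 / Pker b ω) * (1 / Pker b ω))
      MeasureTheory.volume (-π) π := (ch.mul ch).intervalIntegrable _ _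
  have hi2 : IntervalIntegrable (fun ω => (-(2 * c1)) * (1 / Pker b ω))
      MeasureTheory.volume (-π) π := (continuous_const.mul ch).intervalIntegrable _ _
  have hi3 : IntervalIntegrable
      (fun ω => (-(2 * c2)) * ((1 / Pker b ω) * (2 * (Real.cos ω - a) / Pker a ω)))
      MeasureTheory.volume (-π) π := (continuous_const.mul (ch.mul ce)).intervalIntegrable _ _
  have hi4 : IntervalIntegrable (fun _ : ℝ => c1 * c1) MeasureTheory.volume (-π) π :=
    intervalIntegrable_const
  have hi5 : IntervalIntegrable (fun ω => (2 * c1 * c2) * (2 * (Real.cos ω - a) / Pker a ω))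
      MeasureTheory.volume (-π) π := (continuous_const.mul ce).intervalIntegrable _ _
  have hi6 : IntervalIntegrable
      (fun ω => (c2 * c2) * ((2 * (Real.cos ω - a) / Pker a ω) * (2 * (Real.cos ω - a) / Pker a ω)))
      MeasureTheory.volume (-π) π := (continuous_const.mul (ce.mul ce)).intervalIntegrable _ _
  rw [intervalIntegral.integral_add hi1 (hi2.add (hi3.add (hi4.add (hi5.add hi6)))),
    intervalIntegral.integral_add hi2 (hi3.add (hi4.add (hi5.add hi6))),
    intervalIntegral.integral_add hi3 (hi4.add (hi5.add hi6)),
    intervalIntegral.integral_add hi4 (hi5.add hi6),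
    intervalIntegral.integral_add hi5 hi6,
    intervalIntegral.integral_const]
  simp only [intervalIntegral.integral_const_mul]
  rw [J_hh hb, integral_inv_pker hb, J_he ha hb, J_e ha, J_ee ha]
  rw [hc1, hc2]
  have hπ := Real.pi_ne_zero
  have h1a := one_ne_csq ha
  have h1b := one_ne_csq hb
  have hab : 1 - a * b ≠ 0 := by have := ab_lt_one ha hb; linarith
  simp only [smul_eq_mul, sub_neg_eq_add]
  have hba : 1 - b * a ≠ 0 := by rwa [mul_comm]
  field_simp
  ring
end
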